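/- arXiv:0708.0893 — 5 statements merged into one kernel-verified Lean document; each statement's English description precedes it below -/
import Mathlib

section
/- Let (X, μ) be a measure space and let 1 ≤ q < p < ∞ be real numbers. Let u : X → ℝ be a measurable function such that ∫_X |u|^q dμ = 1, |u|^p is integrable, and the function x ↦ |u(x)|^q · log(u(x)²) is integrable. Then ∫_X |u|^q log(u²) dμ ≤ (2p/(p−q)) · log( (∫_X |u|^p dμ)^{1/p} ). -/
open MeasureTheory Real

/-- Jensen-inequality step: if `∫ |u|^q = 1` then
`∫ |u|^q log(u²) ≤ (2p/(p-q)) log((∫ |u|^p)^(1/p))`. -/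
theorem jensen_log_step {X : Type*} [MeasurableSpace X] (μ : Measure X)
    (q p : ℝ) (hq : 1 ≤ q) (hqp : q < p)
    (u : X → ℝ) (hu : Measurable u)
    (hnorm : ∫ x, |u x| ^ q ∂μ = 1)
    (hup : Integrable (fun x => |u x| ^ p) μ)
    (hlog : Integrable (fun x => |u x| ^ q * Real.log ((u x) ^ 2)) μ) :
    ∫ x, |u x| ^ q * Real.log ((u x) ^ 2) ∂μ ≤
      (2 * p / (p - q)) * Real.log ((∫ x, |u x| ^ p ∂μ) ^ (1 / p)) := by
  have hq0 : (0:ℝ) < q := lt_of_lt_of_le one_pos hq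
  have hpq : (0:ℝ) < p - q := sub_pos.mpr hqp
  have hp0 : (0:ℝ) < p := lt_trans hq0 hqp
  -- |u|^q is integrable
  have hiq : Integrable (fun x => |u x| ^ q) μ := by
    by_contra h
    rw [integral_undef h] at hnorm
    norm_num at hnorm
  set s : ℝ := ∫ x, |u x| ^ p ∂μ with hs_def
  have hs0 : 0 ≤ s := integral_nonneg fun x => Real.rpow_nonneg (abs_nonneg _) _
  have hs : 0 < s := by
    rcases hs0.lt_or_eq with h | h
    · exact h
    · exfalso
      have h0 : ∀ᵐ x ∂μ, |u x| ^ p = 0 :=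
        (integral_eq_zero_iff_of_nonneg
          (fun x => Real.rpow_nonneg (abs_nonneg _) _) hup).mp h.symm
      have h1 : ∀ᵐ x ∂μ, |u x| ^ q = 0 := by
        filter_upwards [h0] with x hx
        have : |u x| = 0 := by
          by_contra hne
          have hpos : 0 < |u x| := lt_of_le_of_ne (abs_nonneg _) (Ne.symm hne)
          exact (Real.rpow_pos_of_pos hpos p).ne' hx
        rw [this, Real.zero_rpow hq0.ne']
      rw [integral_eq_zero_of_ae h1] at hnorm
      norm_num at hnorm
  set c1 : ℝ := (2 / (p - q)) * (Real.log s - 1) with hc1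
  set c2 : ℝ := (2 / (p - q)) / s with hc2
  -- pointwise bound
  have hpt : ∀ x, |u x| ^ q * Real.log ((u x) ^ 2) ≤ c1 * |u x| ^ q + c2 * |u x| ^ p := by
    intro x
    rcases eq_or_ne (u x) 0 with h0 | h0
    · rw [h0]
      simp [Real.zero_rpow hq0.ne', Real.zero_rpow hp0.ne']
    · have ha : 0 < |u x| := abs_pos.mpr h0
      set a := |u x| with ha_def
      set t := a ^ (p - q) with ht_def
      have ht : 0 < t := Real.rpow_pos_of_pos ha _
      have hap : a ^ p = a ^ q * t := by
        rw [ht_def, ← Real.rpow_add ha]; ring_nf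
      have hlog2 : Real.log ((u x) ^ 2) = 2 * Real.log a := by
        rw [← sq_abs, ← ha_def, Real.log_pow]; push_cast; ring
      have key : (p - q) * Real.log a - Real.log s ≤ t / s - 1 := by
        have := Real.log_le_sub_one_of_pos (div_pos ht hs)
        rwa [Real.log_div ht.ne' hs.ne', ht_def, Real.log_rpow ha] at this
      have hb : (0:ℝ) ≤ a ^ q := (Real.rpow_pos_of_pos ha q).le
      rw [hlog2, hap]
      have h2 : a ^ q * (2 * Real.log a)
          = (2 / (p - q)) * a ^ q * ((p - q) * Real.log a - Real.log s)
            + (2 / (p - q)) * a ^ q * Real.log s := by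
        field_simp
        ring
      have h3 : c1 * a ^ q + c2 * (a ^ q * t)
          = (2 / (p - q)) * a ^ q * (t / s - 1)
            + (2 / (p - q)) * a ^ q * Real.log s := by
        rw [hc1, hc2]
        field_simp
        ring
      rw [h2, h3]
      have := mul_le_mul_of_nonneg_left key (by positivity : (0:ℝ) ≤ (2 / (p - q)) * a ^ q)
      linarith
  -- integrate
  have hrhs_int : Integrable (fun x => c1 * |u x| ^ q + c2 * |u x| ^ p) μ :=
    (hiq.const_mul c1).add (hup.const_mul c2)
  have hI : ∫ x, |u x| ^ q * Real.log ((u x) ^ 2) ∂μ ≤ c1 + c2 * s := by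
    have := integral_mono hlog hrhs_int hpt
    rwa [integral_add (hiq.const_mul c1) (hup.const_mul c2),
      integral_const_mul, integral_const_mul, hnorm, mul_one, ← hs_def] at this
  have hfin : c1 + c2 * s = (2 * p / (p - q)) * Real.log (s ^ (1 / p)) := by
    rw [Real.log_rpow hs, hc1, hc2]
    field_simp
    ring
  exact hI.trans_eq hfin
end

section
/- Let n ≥ 2 be an integer and let 1 ≤ q < n and p be real numbers satisfying 1/p = 1/q − 1/n. There exists a constant C > 0 depending only on n and q such that for every continuously differentiable, compactly supported function u : ℝⁿ → ℝ with (∫_{ℝⁿ} |u|^q dx)^{1/q} = 1, one has ∫_{ℝⁿ} |u|^q log(u²) dx ≤ (2n/q) · log( C · (∫_{ℝⁿ} ‖∇u‖^q dx)^{1/q} ). -/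
open MeasureTheory Real Filter
open scoped ENNReal NNReal

private lemma aux_cont_rpow_log (q : ℝ) (hq : 1 ≤ q) :
    Continuous (fun t : ℝ => |t| ^ q * Real.log (t ^ 2)) := by
  have hq0 : (0:ℝ) < q := by linarith
  rw [continuous_iff_continuousAt]
  intro t
  rcases eq_or_ne t 0 with rfl | ht
  · have h0 : |(0:ℝ)| ^ q * Real.log ((0:ℝ) ^ 2) = 0 := by
      simp [Real.zero_rpow hq0.ne']
    rw [ContinuousAt, h0]
    have key : Tendsto (fun s : ℝ => Real.log s * s ^ q) (nhdsWithin 0 (Set.Ioi 0)) (nhds 0) :=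
      tendsto_log_mul_rpow_nhdsGT_zero hq0
    have habs : Tendsto (fun t : ℝ => |t|) (nhdsWithin 0 {0}ᶜ) (nhdsWithin 0 (Set.Ioi 0)) := by
      rw [tendsto_nhdsWithin_iff]
      constructor
      · exact (continuous_abs.tendsto 0).mono_left nhdsWithin_le_nhds |>.congr' (by
          filter_upwards with t using rfl) |>.mono_right (by simp)
      · filter_upwards [self_mem_nhdsWithin] with t (ht : t ≠ 0)
        exact abs_pos.mpr ht
    have h1 : Tendsto (fun t : ℝ => |t| ^ q * Real.log (t ^ 2)) (nhdsWithin 0 {0}ᶜ) (nhds 0) := by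
      have := (key.comp habs).const_mul (2:ℝ)
      simp only [mul_zero] at this
      refine this.congr (fun t => ?_)
      simp only [Function.comp]
      rw [Real.log_pow, ← Real.log_abs t]
      push_cast
      ring
    have h2 : Tendsto (fun t : ℝ => |t| ^ q * Real.log (t ^ 2)) (pure (0:ℝ)) (nhds 0) := by
      rw [tendsto_pure_left]
      intro s hs
      simpa [h0] using mem_of_mem_nhds hs
    have := h1.sup h2
    rwa [nhdsNE_sup_pure] at this
  · have c1 : Continuous (fun t : ℝ => |t| ^ q) :=
      continuous_abs.rpow_const (fun x => Or.inr hq0.le)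
    exact c1.continuousAt.mul ((continuousAt_pow t 2).log (pow_ne_zero 2 ht))

set_option maxHeartbeats 1000000 in

/-- Euclidean logarithmic Sobolev inequality derived from the Sobolev
inequality: for `1 ≤ q < n`, `1/p = 1/q - 1/n`, there is `C > 0` (depending
only on `n` and `q`) such that every `C¹` compactly supported `u : ℝⁿ → ℝ`
with `‖u‖_q = 1` satisfies
`∫ |u|^q log(u²) ≤ (2n/q) log(C (∫ ‖∇u‖^q)^(1/q))`. -/
theorem logSobolev_of_sobolev (n : ℕ) (hn : 2 ≤ n) (q p : ℝ)
    (hq : 1 ≤ q) (hqn : q < n) (hp : 1 / p = 1 / q - 1 / (n : ℝ)) :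
    ∃ C > 0, ∀ u : EuclideanSpace ℝ (Fin n) → ℝ,
      ContDiff ℝ 1 u → HasCompactSupport u →
      (∫ x, |u x| ^ q) ^ (1 / q) = 1 →
      ∫ x, |u x| ^ q * Real.log ((u x) ^ 2) ≤
        (2 * n / q) * Real.log (C * (∫ x, ‖fderiv ℝ u x‖ ^ q) ^ (1 / q)) := by
  have hq0 : (0:ℝ) < q := by linarith
  have hn0 : (0:ℝ) < n := by positivity
  have hinv : (0:ℝ) < 1/q - 1/(n:ℝ) := by
    have h1 : 1/(n:ℝ) < 1/q := one_div_lt_one_div_of_lt hq0 hqn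
    linarith
  have hp0 : (0:ℝ) < p := by
    have : (0:ℝ) < 1/p := hp ▸ hinv
    exact one_div_pos.mp this
  have hqp : q < p := by
    have h1 : 1/p < 1/q := by
      rw [hp]
      have : (0:ℝ) < 1/(n:ℝ) := by positivity
      linarith
    exact lt_of_one_div_lt_one_div hp0 h1
  have hpqn : (p - q) * (n:ℝ) = p * q := by
    field_simp at hp
    nlinarith [hp]
  set c : ℝ := 2 * (n:ℝ) / (q * p) with hc_def
  have hc0 : 0 < c := by positivity
  set CS : ℝ≥0 :=
    eLpNormLESNormFDerivOfEqInnerConst (volume : Measure (EuclideanSpace ℝ (Fin n))) q.toNNReal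
    with hCS_def
  refine ⟨(CS:ℝ) + 1, by positivity, ?_⟩
  intro u hu h2u hnorm
  have hcu : Continuous u := hu.continuous
  have hfd : Continuous (fderiv ℝ u) := (hu.fderiv_right (m := 0) le_rfl).continuous
  have h2fd : HasCompactSupport (fderiv ℝ u) := h2u.fderiv (𝕜 := ℝ)
  -- integrability facts
  have Iq : Integrable (fun x => |u x| ^ q) volume := by
    refine Continuous.integrable_of_hasCompactSupport ?_ ?_
    · exact (continuous_abs.comp hcu).rpow_const (fun x => Or.inr hq0.le)
    · exact h2u.comp_left (g := fun t : ℝ => |t| ^ q) (by simp [Real.zero_rpow hq0.ne'])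
  have Ip : Integrable (fun x => |u x| ^ p) volume := by
    refine Continuous.integrable_of_hasCompactSupport ?_ ?_
    · exact (continuous_abs.comp hcu).rpow_const (fun x => Or.inr hp0.le)
    · exact h2u.comp_left (g := fun t : ℝ => |t| ^ p) (by simp [Real.zero_rpow hp0.ne'])
  have Ilog : Integrable (fun x => |u x| ^ q * Real.log ((u x) ^ 2)) volume := by
    refine Continuous.integrable_of_hasCompactSupport ?_ ?_
    · exact (aux_cont_rpow_log q hq).comp hcu
    · exact h2u.comp_left (g := fun t : ℝ => |t| ^ q * Real.log (t ^ 2))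
        (by simp [Real.zero_rpow hq0.ne'])
  have Ig : Integrable (fun x => ‖fderiv ℝ u x‖ ^ q) volume := by
    refine Continuous.integrable_of_hasCompactSupport ?_ ?_
    · exact (continuous_norm.comp hfd).rpow_const (fun x => Or.inr hq0.le)
    · exact h2fd.comp_left (g := fun L : EuclideanSpace ℝ (Fin n) →L[ℝ] ℝ => ‖L‖ ^ q)
        (by simp [Real.zero_rpow hq0.ne'])
  -- the q-norm is 1
  have hIq0 : (0:ℝ) ≤ ∫ x, |u x| ^ q := integral_nonneg (fun x => by positivity)
  have hA1 : (∫ x, |u x| ^ q) = 1 := by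
    have h1 : ((∫ x, |u x| ^ q) ^ (1/q)) ^ q = (1:ℝ) ^ q := by rw [hnorm]
    rwa [← Real.rpow_mul hIq0, one_div_mul_cancel hq0.ne', Real.rpow_one,
      Real.one_rpow] at h1
  set A : ℝ := ∫ x, |u x| ^ p with hA_def
  have hA0 : (0:ℝ) ≤ A := integral_nonneg (fun x => by positivity)
  have hApos : (0:ℝ) < A := by
    rcases hA0.lt_or_eq with h | h
    · exact h
    · exfalso
      have hz : (fun x => |u x| ^ p) =ᵐ[volume] 0 := by
        rw [← integral_eq_zero_iff_of_nonneg (fun x => by positivity) Ip]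
        exact h.symm
      have hz' : (fun x => |u x| ^ q) =ᵐ[volume] 0 := by
        filter_upwards [hz] with x hx
        have hux : |u x| = 0 := by
          by_contra h0
          have : (0:ℝ) < |u x| := lt_of_le_of_ne (abs_nonneg _) (Ne.symm h0)
          have := Real.rpow_pos_of_pos this p
          simp only [Pi.zero_apply] at hx
          linarith
        simp [hux, Real.zero_rpow hq0.ne']
      have : (∫ x, |u x| ^ q) = 0 := by
        rw [integral_congr_ae hz']; simp
      rw [hA1] at this
      exact one_ne_zero this
  -- Sobolev inequality
  have hfr : 0 < Module.finrank ℝ (EuclideanSpace ℝ (Fin n)) := by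
    rw [finrank_euclideanSpace_fin]; omega
  have hq1' : (1:ℝ≥0) ≤ q.toNNReal := by
    rw [← Real.toNNReal_one]
    exact (Real.toNNReal_le_toNNReal_iff hq0.le).mpr hq
  have hp' : ((p.toNNReal : ℝ))⁻¹ = ((q.toNNReal : ℝ))⁻¹
      - ((Module.finrank ℝ (EuclideanSpace ℝ (Fin n)) : ℝ))⁻¹ := by
    rw [Real.coe_toNNReal _ hp0.le, Real.coe_toNNReal _ hq0.le, finrank_euclideanSpace_fin]
    simpa [one_div] using hp
  have sob := eLpNorm_le_eLpNorm_fderiv_of_eq_inner (μ := (volume : Measure (EuclideanSpace ℝ (Fin n))))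
    hu h2u hq1' hfr hp'
  have m1 : MemLp u (p.toNNReal) volume := hcu.memLp_of_hasCompactSupport h2u
  have m2 : MemLp (fderiv ℝ u) (q.toNNReal) volume := hfd.memLp_of_hasCompactSupport h2fd
  set B : ℝ := (∫ x, ‖fderiv ℝ u x‖ ^ q) ^ (1/q) with hB_def
  have hB0 : (0:ℝ) ≤ B := Real.rpow_nonneg (integral_nonneg (fun x => by positivity)) _
  have hpNN0 : ((p.toNNReal : ℝ≥0∞)) ≠ 0 := by
    simp [Real.toNNReal_eq_zero, not_le, hp0]
  have hqNN0 : ((q.toNNReal : ℝ≥0∞)) ≠ 0 := by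
    simp [Real.toNNReal_eq_zero, not_le, hq0]
  have e1 : eLpNorm u (p.toNNReal) volume = ENNReal.ofReal (A ^ (1/p)) := by
    rw [m1.eLpNorm_eq_integral_rpow_norm hpNN0 ENNReal.coe_ne_top]
    congr 1
    simp only [ENNReal.coe_toReal, Real.coe_toNNReal _ hp0.le, Real.norm_eq_abs, one_div, hA_def]
  have e2 : eLpNorm (fderiv ℝ u) (q.toNNReal) volume = ENNReal.ofReal B := by
    rw [m2.eLpNorm_eq_integral_rpow_norm hqNN0 ENNReal.coe_ne_top]
    congr 1
    simp only [ENNReal.coe_toReal, Real.coe_toNNReal _ hq0.le, one_div, hB_def]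
  rw [e1, e2] at sob
  have hsob : A ^ (1/p) ≤ (CS:ℝ) * B := by
    rw [← ENNReal.ofReal_coe_nnreal, ← ENNReal.ofReal_mul CS.coe_nonneg] at sob
    exact (ENNReal.ofReal_le_ofReal_iff (by positivity)).mp sob
  have hAp_pos : (0:ℝ) < A ^ (1/p) := Real.rpow_pos_of_pos hApos _
  -- pointwise bound
  have hpt : ∀ x, |u x| ^ q * Real.log ((u x) ^ 2) ≤
      c * (|u x| ^ p / A + (Real.log A - 1) * |u x| ^ q) := by
    intro x
    rcases eq_or_ne (u x) 0 with h | h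
    · simp [h, Real.zero_rpow hq0.ne', Real.zero_rpow hp0.ne']
    · set t : ℝ := |u x| with ht_def
      have ht0 : (0:ℝ) < t := abs_pos.mpr h
      have hc2 : c * (p - q) = 2 := by
        rw [hc_def]
        field_simp
        nlinarith [hpqn]
      have hlog : Real.log ((u x) ^ 2) = 2 * Real.log t := by
        rw [Real.log_pow, ← Real.log_abs (u x)]
        push_cast
        ring
      have key : Real.log (t ^ (p - q)) ≤ t ^ (p - q) / A + (Real.log A - 1) := by
        have h1 : Real.log (t ^ (p - q) / A) ≤ t ^ (p - q) / A - 1 :=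
          Real.log_le_sub_one_of_pos (by positivity)
        rw [Real.log_div (by positivity) hApos.ne'] at h1
        linarith
      have hrw : Real.log (t ^ (p - q)) = (p - q) * Real.log t := Real.log_rpow ht0 _
      have h2 : t ^ q * ((p - q) * Real.log t) ≤ t ^ q * (t ^ (p - q) / A + (Real.log A - 1)) := by
        refine mul_le_mul_of_nonneg_left ?_ (by positivity)
        rw [← hrw]; exact key
      have h3 : t ^ q * t ^ (p - q) = t ^ p := by
        rw [← Real.rpow_add ht0]; ring_nf
      have h4 : t ^ q * (t ^ (p - q) / A + (Real.log A - 1))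
          = t ^ p / A + (Real.log A - 1) * t ^ q := by
        calc t ^ q * (t ^ (p - q) / A + (Real.log A - 1))
            = (t ^ q * t ^ (p - q)) / A + (Real.log A - 1) * t ^ q := by ring
          _ = t ^ p / A + (Real.log A - 1) * t ^ q := by rw [h3]
      have h5 : t ^ q * Real.log ((u x) ^ 2) = c * (t ^ q * ((p - q) * Real.log t)) := by
        rw [hlog]
        linear_combination (-(t ^ q * Real.log t)) * hc2
      calc |u x| ^ q * Real.log ((u x) ^ 2)
          = c * (t ^ q * ((p - q) * Real.log t)) := h5
        _ ≤ c * (t ^ q * (t ^ (p - q) / A + (Real.log A - 1))) :=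
            mul_le_mul_of_nonneg_left h2 hc0.le
        _ = c * (|u x| ^ p / A + (Real.log A - 1) * |u x| ^ q) := by rw [h4]
  -- integrate
  have Irhs : Integrable (fun x => c * (|u x| ^ p / A + (Real.log A - 1) * |u x| ^ q)) volume :=
    ((Ip.div_const A).add (Iq.const_mul _)).const_mul c
  have hInt := integral_mono Ilog Irhs hpt
  rw [integral_const_mul, integral_add (Ip.div_const A) (Iq.const_mul _), integral_div,
    integral_const_mul, hA1, ← hA_def] at hInt
  have hInt2 : (∫ x, |u x| ^ q * Real.log ((u x) ^ 2)) ≤ c * Real.log A := by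
    have : A / A = 1 := div_self hApos.ne'
    calc (∫ x, |u x| ^ q * Real.log ((u x) ^ 2)) ≤ c * (A / A + (Real.log A - 1) * 1) := hInt
      _ = c * Real.log A := by rw [this]; ring
  -- conclude
  have hAB : A ^ (1/p) ≤ ((CS:ℝ) + 1) * B := by
    refine hsob.trans ?_
    have : (CS:ℝ) ≤ (CS:ℝ) + 1 := by linarith
    exact mul_le_mul_of_nonneg_right this hB0
  have hlogle : Real.log (A ^ (1/p)) ≤ Real.log (((CS:ℝ) + 1) * B) :=
    Real.log_le_log hAp_pos hAB
  have hfin : c * Real.log A = (2 * n / q) * Real.log (A ^ (1/p)) := by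
    rw [Real.log_rpow hApos, hc_def]
    ring
  calc (∫ x, |u x| ^ q * Real.log ((u x) ^ 2)) ≤ c * Real.log A := hInt2
    _ = (2 * n / q) * Real.log (A ^ (1/p)) := hfin
    _ ≤ (2 * n / q) * Real.log (((CS:ℝ) + 1) * B) := by
        refine mul_le_mul_of_nonneg_left hlogle (by positivity)
end

section
/- Let n ≥ 2 be an integer and let 1 ≤ μ < 2 be a real number. There exists a constant C > 0 depending only on n and μ such that for every continuously differentiable, compactly supported function u : ℝⁿ → ℝ with ∫_{ℝⁿ} u² dx = 1 and ∇u not identically zero, one has ∫_{ℝⁿ} u² log(u²) dx ≤ n · log( C · (2/μ) · (∫_{ℝⁿ} ‖∇u‖² dx)^{1/2} ). -/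
open MeasureTheory Real
open scoped ENNReal NNReal

/-- `L²` logarithmic Sobolev inequality on `ℝⁿ`: for `1 ≤ μ < 2` there is
`C > 0` (depending only on `n` and `μ`) such that every `C¹` compactly
supported `u : ℝⁿ → ℝ` with `∫ u² = 1` and `∇u` not identically zero
satisfies `∫ u² log(u²) ≤ n log(C (2/μ) (∫ ‖∇u‖²)^(1/2))`. -/
theorem logSobolev_L2 (n : ℕ) (hn : 2 ≤ n) (m : ℝ) (hm1 : 1 ≤ m) (hm2 : m < 2) :
    ∃ C > 0, ∀ u : EuclideanSpace ℝ (Fin n) → ℝ,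
      ContDiff ℝ 1 u → HasCompactSupport u →
      (∫ x, (u x) ^ 2) = 1 → fderiv ℝ u ≠ 0 →
      ∫ x, (u x) ^ 2 * Real.log ((u x) ^ 2) ≤
        (n : ℝ) * Real.log (C * (2 / m) *
          (∫ x, ‖fderiv ℝ u x‖ ^ (2 : ℝ)) ^ ((1 : ℝ) / 2)) := by
  classical
  set E := EuclideanSpace ℝ (Fin n)
  have hn1 : (1 : ℝ) < (n : ℝ) := by exact_mod_cast lt_of_lt_of_le one_lt_two hn
  set k : ℝ := (n : ℝ) - 1 with hk_def
  have hk : 0 < k := by simp only [hk_def]; linarith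
  set p : ℝ := (n : ℝ) / ((n : ℝ) - 1) with hp_def
  have hp1k : p = 1 + 1 / k := by
    have hk0 : (n:ℝ) - 1 ≠ 0 := (sub_pos.mpr hn1).ne'
    rw [hp_def, hk_def]; field_simp; ring
  have hp_pos : 0 < p := by positivity
  have hkp : k * p = (n : ℝ) := by
    have hk0 : (n:ℝ) - 1 ≠ 0 := (sub_pos.mpr hn1).ne'
    rw [hp_def, hk_def]; field_simp
  have hp : Real.HolderConjugate (n : ℝ) p :=
    Real.HolderConjugate.conjExponent hn1
  set C0 : ℝ := NNReal.toReal (lintegralPowLePowLIntegralFDerivConst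
      (volume : Measure E) p) with hC0_def
  set C1 : ℝ := max C0 1 with hC1_def
  have hC1_one : 1 ≤ C1 := le_max_right _ _
  have hC1_pos : 0 < C1 := lt_of_lt_of_le one_pos hC1_one
  refine ⟨2 * C1, by positivity, ?_⟩
  intro u hu h2u hint hfd
  have hudiff : Differentiable ℝ u := hu.differentiable one_ne_zero
  have hucont : Continuous u := hu.continuous
  have hfcont : Continuous (fderiv ℝ u) := hu.continuous_fderiv one_ne_zero
  -- the function v = u * u
  set v : E → ℝ := fun x => u x * u x with hv_def
  have hv : ContDiff ℝ 1 v := hu.mul hu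
  have h2v : HasCompactSupport v := h2u.mul_left
  have hvnn : ∀ x, v x = u x ^ 2 := fun x => (sq (u x)).symm
  have hfderiv_v : ∀ x, fderiv ℝ v x = (2 * u x) • fderiv ℝ u x := by
    intro x
    have := fderiv_mul (𝕜 := ℝ) (hudiff x) (hudiff x)
    rw [hv_def]
    rw [show (fun x => u x * u x) = u * u from rfl, this]
    rw [two_mul, add_smul]
  have hnorm_fv : ∀ x, ‖fderiv ℝ v x‖ = 2 * (|u x| * ‖fderiv ℝ u x‖) := by
    intro x
    rw [hfderiv_v x, norm_smul, Real.norm_eq_abs, abs_mul, abs_two, mul_assoc]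
  -- basic integrability facts
  have hI_u2 : Integrable (fun x => u x ^ 2) := by
    have h : Integrable v := hv.continuous.integrable_of_hasCompactSupport (μ := volume) h2v
    exact h.congr (Filter.Eventually.of_forall fun x => hvnn x)
  have hI_A : Integrable (fun x => (u x ^ 2) ^ p) := by
    have hc : Continuous fun x => (v x) ^ p :=
      hv.continuous.rpow_const fun x => Or.inr hp_pos.le
    have hcs : HasCompactSupport fun x => (v x) ^ p := by
      have : HasCompactSupport ((fun t : ℝ => t ^ p) ∘ v) :=
        h2v.comp_left (Real.zero_rpow hp_pos.ne')
      exact this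
    have := hc.integrable_of_hasCompactSupport (μ := volume) hcs
    simpa [hvnn] using this
  have hI_ent : Integrable (fun x => u x ^ 2 * Real.log (u x ^ 2)) := by
    have hc : Continuous fun x => v x * Real.log (v x) :=
      Real.continuous_mul_log.comp hv.continuous
    have hcs : HasCompactSupport fun x => v x * Real.log (v x) := by
      have : HasCompactSupport ((fun t : ℝ => t * Real.log t) ∘ v) :=
        h2v.comp_left (by simp)
      exact this
    have := hc.integrable_of_hasCompactSupport (μ := volume) hcs
    simpa [hvnn] using this
  have hI_B : Integrable (fun x => ‖fderiv ℝ u x‖ ^ (2 : ℝ)) := by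
    have hc : Continuous fun x => ‖fderiv ℝ u x‖ ^ (2 : ℝ) :=
      hfcont.norm.rpow_const fun x => Or.inr (by norm_num)
    have hcs : HasCompactSupport fun x => ‖fderiv ℝ u x‖ ^ (2 : ℝ) := by
      have : HasCompactSupport
          ((fun t : (E →L[ℝ] ℝ) => ‖t‖ ^ (2 : ℝ)) ∘ fderiv ℝ u) :=
        (h2u.fderiv ℝ).comp_left (by simp [Real.zero_rpow])
      exact this
    exact hc.integrable_of_hasCompactSupport (μ := volume) hcs
  have hI_fv : Integrable (fun x => ‖fderiv ℝ v x‖) := by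
    have hc : Continuous fun x => ‖fderiv ℝ v x‖ :=
      (hv.continuous_fderiv one_ne_zero).norm
    have hcs : HasCompactSupport fun x => ‖fderiv ℝ v x‖ := (h2v.fderiv ℝ).norm
    exact hc.integrable_of_hasCompactSupport (μ := volume) hcs
  -- the key quantities
  set A : ℝ := ∫ x, (u x ^ 2) ^ p with hA_def
  set B : ℝ := ∫ x, ‖fderiv ℝ u x‖ ^ (2 : ℝ) with hB_def
  set G : ℝ := ∫ x, ‖fderiv ℝ v x‖ with hG_def
  have hG_nonneg : 0 ≤ G := integral_nonneg fun x => norm_nonneg _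
  -- positivity of B
  have hB_pos : 0 < B := by
    rw [hB_def]
    refine (integral_pos_iff_support_of_nonneg
      (fun x => Real.rpow_nonneg (norm_nonneg _) _) hI_B).mpr ?_
    have hsupp : (Function.support fun x => ‖fderiv ℝ u x‖ ^ (2 : ℝ)) =
        {x | fderiv ℝ u x ≠ 0} := by
      ext x
      simp [Function.mem_support,
        Real.rpow_eq_zero_iff_of_nonneg (norm_nonneg (fderiv ℝ u x))]
    rw [hsupp]
    have hopen : IsOpen {x : E | fderiv ℝ u x ≠ 0} :=
      isOpen_compl_iff.mpr (isClosed_eq (by fun_prop) continuous_const)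
    refine hopen.measure_pos volume ?_
    obtain ⟨x, hx⟩ : ∃ x, fderiv ℝ u x ≠ 0 := by
      by_contra h
      push_neg at h
      exact hfd (funext h)
    exact ⟨x, hx⟩
  -- positivity of A
  have hA_pos : 0 < A := by
    rw [hA_def]
    refine (integral_pos_iff_support_of_nonneg
      (fun x => Real.rpow_nonneg (sq_nonneg _) _) hI_A).mpr ?_
    have hsupp : (Function.support fun x => (u x ^ 2) ^ p) = {x | u x ≠ 0} := by
      ext x
      simp [Function.mem_support,
        Real.rpow_eq_zero_iff_of_nonneg (sq_nonneg (u x)), hp_pos.ne',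
        pow_eq_zero_iff]
    rw [hsupp]
    have hopen : IsOpen {x : E | u x ≠ 0} :=
      isOpen_compl_iff.mpr (isClosed_eq hucont continuous_const)
    refine hopen.measure_pos volume ?_
    obtain ⟨x, hx⟩ : ∃ x, u x ≠ 0 := by
      by_contra h
      push_neg at h
      rw [show u = fun _ => (0 : ℝ) from funext h] at hint
      simp at hint
    exact ⟨x, hx⟩
  -- Sobolev inequality (L¹ version), converted to real integrals: A ≤ C0 * G ^ p
  have hrank : Module.finrank ℝ E = n := finrank_euclideanSpace_fin
  have hSobolev : A ≤ C0 * G ^ p := by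
    have hp' : Real.HolderConjugate (Module.finrank ℝ E) p := by rw [hrank]; exact hp
    have key := lintegral_pow_le_pow_lintegral_fderiv (volume : Measure E) hv h2v hp'
    have hA_eq : ENNReal.ofReal A = ∫⁻ x, (‖v x‖₊ : ℝ≥0∞) ^ p := by
      rw [hA_def, ofReal_integral_eq_lintegral_ofReal hI_A
        (Filter.Eventually.of_forall fun x => Real.rpow_nonneg (sq_nonneg _) _)]
      congr 1
      ext x
      rw [← ENNReal.ofReal_rpow_of_nonneg (sq_nonneg _) hp_pos.le]
      congr 1
      rw [← enorm_eq_nnnorm, ← ofReal_norm]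
      congr 1
      rw [Real.norm_eq_abs, hvnn x, abs_of_nonneg (sq_nonneg _)]
    have hG_eq : ENNReal.ofReal G = ∫⁻ x, (‖fderiv ℝ v x‖₊ : ℝ≥0∞) := by
      rw [hG_def, ofReal_integral_eq_lintegral_ofReal hI_fv
        (Filter.Eventually.of_forall fun x => norm_nonneg _)]
      congr 1
      ext x
      rw [← enorm_eq_nnnorm, ← ofReal_norm]
    simp only [enorm_eq_nnnorm] at key
    rw [← hA_eq, ← hG_eq] at key
    have hfin : (↑(lintegralPowLePowLIntegralFDerivConst (volume : Measure E) p) *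
        ENNReal.ofReal G ^ p) ≠ ⊤ := by
      apply ENNReal.mul_ne_top ENNReal.coe_ne_top
      exact (ENNReal.rpow_ne_top_of_nonneg hp_pos.le ENNReal.ofReal_ne_top)
    have := ENNReal.toReal_mono hfin key
    rw [ENNReal.toReal_ofReal hA_pos.le, ENNReal.toReal_mul, ← ENNReal.toReal_rpow,
      ENNReal.toReal_ofReal hG_nonneg] at this
    simpa [hC0_def] using this
  -- Cauchy-Schwarz: G ≤ 2 * B ^ (1/2)
  have hCS : G ≤ 2 * B ^ ((1:ℝ)/2) := by
    have h22 : Real.HolderConjugate 2 2 := by constructor <;> norm_num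
    have hmem1 : MemLp (fun x => |u x|) (ENNReal.ofReal 2) volume := by
      have : MemLp u (ENNReal.ofReal 2) volume :=
        hucont.memLp_of_hasCompactSupport (μ := volume) h2u
      exact this.abs
    have hmem2 : MemLp (fun x => ‖fderiv ℝ u x‖) (ENNReal.ofReal 2) volume := by
      have : MemLp (fderiv ℝ u) (ENNReal.ofReal 2) volume :=
        hfcont.memLp_of_hasCompactSupport (μ := volume) (h2u.fderiv ℝ)
      exact this.norm
    have hHolder := integral_mul_le_Lp_mul_Lq_of_nonneg h22
      (Filter.Eventually.of_forall fun x => abs_nonneg (u x))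
      (Filter.Eventually.of_forall fun x => norm_nonneg _) hmem1 hmem2
    have hG_eq : G = 2 * ∫ x, |u x| * ‖fderiv ℝ u x‖ := by
      rw [hG_def, ← integral_const_mul]
      congr 1
      ext x
      rw [hnorm_fv x]
    have hu2 : (∫ x, |u x| ^ (2:ℝ)) = 1 := by
      rw [← hint]
      congr 1
      ext x
      rw [show (2:ℝ) = ((2:ℕ):ℝ) by norm_num, Real.rpow_natCast, sq_abs]
    have hnorm2 : (∫ x, ‖fderiv ℝ u x‖ ^ (2:ℝ)) = B := rfl
    rw [hu2, hnorm2] at hHolder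
    rw [hG_eq]
    have : (1:ℝ) ^ ((1:ℝ)/2) = 1 := Real.one_rpow _
    calc 2 * ∫ x, |u x| * ‖fderiv ℝ u x‖
        ≤ 2 * ((1:ℝ) ^ ((1:ℝ)/2) * B ^ ((1:ℝ)/2)) := by
          apply mul_le_mul_of_nonneg_left _ (by norm_num)
          exact hHolder
      _ = 2 * B ^ ((1:ℝ)/2) := by rw [this, one_mul]
  -- entropy step: ∫ u² log u² ≤ k * log A
  have hEntropy : (∫ x, u x ^ 2 * Real.log (u x ^ 2)) ≤ k * Real.log A := by
    have hpoint : ∀ x, u x ^ 2 * Real.log (u x ^ 2) ≤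
        k * ((u x ^ 2) ^ p / A) - k * u x ^ 2 + (k * Real.log A) * u x ^ 2 := by
      intro x
      set a : ℝ := u x ^ 2 with ha_def
      have ha : 0 ≤ a := sq_nonneg _
      rcases eq_or_lt_of_le ha with h0 | h0
      · rw [← h0]
        simp [Real.zero_rpow hp_pos.ne']
      · -- a > 0
        have hlog : Real.log (a ^ ((1:ℝ)/k)) = (1/k) * Real.log a :=
          Real.log_rpow h0 _
        have hle : Real.log (a ^ ((1:ℝ)/k) / A) ≤ a ^ ((1:ℝ)/k) / A - 1 :=
          Real.log_le_sub_one_of_pos (by positivity)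
        have hsplit : Real.log (a ^ ((1:ℝ)/k) / A) =
            Real.log (a ^ ((1:ℝ)/k)) - Real.log A :=
          Real.log_div (by positivity) hA_pos.ne'
        have h1 : Real.log a ≤ k * (a ^ ((1:ℝ)/k) / A - 1 + Real.log A) := by
          have hh := hsplit ▸ hle
          have h2 : Real.log (a ^ ((1:ℝ)/k)) ≤ a ^ ((1:ℝ)/k) / A - 1 + Real.log A := by
            linarith
          rw [hlog] at h2
          have h3 := mul_le_mul_of_nonneg_left h2 hk.le
          have h5 : k * (1 / k * Real.log a) = Real.log a := by field_simp
          linarith [h3, h5.le, h5.ge]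
        have h4 := mul_le_mul_of_nonneg_left h1 ha
        have hap : a * a ^ ((1:ℝ)/k) = a ^ p := by
          rw [hp1k]
          conv_lhs => rw [show a * a ^ ((1:ℝ)/k) = a ^ (1:ℝ) * a ^ ((1:ℝ)/k) by
            rw [Real.rpow_one]]
          rw [← Real.rpow_add h0]
        calc a * Real.log a ≤ a * (k * (a ^ ((1:ℝ)/k) / A - 1 + Real.log A)) := h4
          _ = k * ((a * a ^ ((1:ℝ)/k)) / A) - k * a + (k * Real.log A) * a := by ring
          _ = k * (a ^ p / A) - k * a + (k * Real.log A) * a := by rw [hap]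
    have hI_rhs1 : Integrable (fun x => k * ((u x ^ 2) ^ p / A)) := by
      simpa [div_eq_mul_inv, mul_assoc, mul_comm, mul_left_comm] using
        (hI_A.const_mul (k / A))
    have hI_rhs : Integrable (fun x =>
        k * ((u x ^ 2) ^ p / A) - k * u x ^ 2 + (k * Real.log A) * u x ^ 2) :=
      (hI_rhs1.sub (hI_u2.const_mul k)).add (hI_u2.const_mul (k * Real.log A))
    have hmono := integral_mono hI_ent hI_rhs hpoint
    have hcalc : (∫ x, (k * ((u x ^ 2) ^ p / A) - k * u x ^ 2 +
        (k * Real.log A) * u x ^ 2)) = k * Real.log A := by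
      have hfun : (fun x => k * ((u x ^ 2) ^ p / A) - k * u x ^ 2 +
          (k * Real.log A) * u x ^ 2) =
          fun x => (k / A) * (u x ^ 2) ^ p + (k * Real.log A - k) * u x ^ 2 := by
        ext x; ring
      rw [hfun, integral_add (hI_A.const_mul (k / A))
        (hI_u2.const_mul (k * Real.log A - k)), integral_const_mul, integral_const_mul,
        hint, ← hA_def, div_mul_cancel₀ _ hA_pos.ne']
      ring
    exact hmono.trans hcalc.le
  -- combine everything
  have hB12_pos : (0:ℝ) < B ^ ((1:ℝ)/2) := Real.rpow_pos_of_pos hB_pos _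
  have hGp : G ^ p ≤ (2 * B ^ ((1:ℝ)/2)) ^ p :=
    Real.rpow_le_rpow hG_nonneg hCS hp_pos.le
  have hC0C1 : C0 ≤ C1 := le_max_left _ _
  have hA_le : A ≤ C1 * (2 * B ^ ((1:ℝ)/2)) ^ p := by
    calc A ≤ C0 * G ^ p := hSobolev
      _ ≤ C1 * (2 * B ^ ((1:ℝ)/2)) ^ p := by
          apply mul_le_mul hC0C1 hGp (Real.rpow_nonneg hG_nonneg _) hC1_pos.le
  have hlogA : Real.log A ≤ Real.log C1 + p * Real.log (2 * B ^ ((1:ℝ)/2)) := by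
    calc Real.log A ≤ Real.log (C1 * (2 * B ^ ((1:ℝ)/2)) ^ p) :=
          Real.log_le_log hA_pos hA_le
      _ = Real.log C1 + Real.log ((2 * B ^ ((1:ℝ)/2)) ^ p) := by
          rw [Real.log_mul hC1_pos.ne' (by positivity)]
      _ = Real.log C1 + p * Real.log (2 * B ^ ((1:ℝ)/2)) := by
          rw [Real.log_rpow (by positivity)]
  have hfinal : (∫ x, u x ^ 2 * Real.log (u x ^ 2)) ≤
      k * Real.log C1 + (n : ℝ) * Real.log (2 * B ^ ((1:ℝ)/2)) := by
    calc (∫ x, u x ^ 2 * Real.log (u x ^ 2)) ≤ k * Real.log A := hEntropy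
      _ ≤ k * (Real.log C1 + p * Real.log (2 * B ^ ((1:ℝ)/2))) :=
          mul_le_mul_of_nonneg_left hlogA hk.le
      _ = k * Real.log C1 + (k * p) * Real.log (2 * B ^ ((1:ℝ)/2)) := by ring
      _ = k * Real.log C1 + (n : ℝ) * Real.log (2 * B ^ ((1:ℝ)/2)) := by rw [hkp]
  -- the right-hand side
  have hm_pos : 0 < m := lt_of_lt_of_le one_pos hm1
  have h2m : (1:ℝ) ≤ 2 / m := by
    rw [le_div_iff₀ hm_pos]; linarith
  have h2m_pos : (0:ℝ) < 2 / m := by positivity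
  have hRHS : (n : ℝ) * Real.log (2 * C1 * (2 / m) * B ^ ((1:ℝ)/2)) =
      (n : ℝ) * Real.log C1 + (n : ℝ) * Real.log (2 / m) +
        (n : ℝ) * Real.log (2 * B ^ ((1:ℝ)/2)) := by
    have harg : 2 * C1 * (2 / m) * B ^ ((1:ℝ)/2) =
        C1 * ((2 / m) * (2 * B ^ ((1:ℝ)/2))) := by ring
    rw [harg, Real.log_mul hC1_pos.ne' (by positivity),
      Real.log_mul h2m_pos.ne' (by positivity)]
    ring
  have hlogC1_nonneg : 0 ≤ Real.log C1 := Real.log_nonneg hC1_one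
  have hlog2m_nonneg : 0 ≤ Real.log (2 / m) := Real.log_nonneg h2m
  calc (∫ x, u x ^ 2 * Real.log (u x ^ 2)) ≤
        k * Real.log C1 + (n : ℝ) * Real.log (2 * B ^ ((1:ℝ)/2)) := hfinal
    _ ≤ (n : ℝ) * Real.log C1 + (n : ℝ) * Real.log (2 / m) +
        (n : ℝ) * Real.log (2 * B ^ ((1:ℝ)/2)) := by
        have hkn : k ≤ (n : ℝ) := by simp only [hk_def]; linarith
        have h1 : k * Real.log C1 ≤ (n : ℝ) * Real.log C1 :=
          mul_le_mul_of_nonneg_right hkn hlogC1_nonneg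
        have h2 : 0 ≤ (n : ℝ) * Real.log (2 / m) := by positivity
        linarith
    _ = (n : ℝ) * Real.log (2 * C1 * (2 / m) * B ^ ((1:ℝ)/2)) := hRHS.symm
end

section
/- Let (X, μ) be a σ-finite measure space, let n > 0 and 1 < q < n be real numbers, and let p satisfy 1/p = 1/q − 1/n. Let (T_t)_{t>0} be a family of linear operators defined on L^q(μ) with values in measurable functions on X such that: (i) T_{t+s} u = T_s(T_t u) for all s, t > 0 and u ∈ L^q(μ); (ii) ‖T_t u‖_{L^q(μ)} ≤ ‖u‖_{L^q(μ)} for all t > 0 and u ∈ L^q(μ); (iii) there is c > 0 with ‖T_t u‖_{L^∞(μ)} ≤ c t^{−n/(2q)} ‖u‖_{L^q(μ)} for all t > 0 and u ∈ L^q(μ); and (iv) for each u ∈ L^q(μ) the map (t, x) ↦ (T_t u)(x) admits a jointly measurable representative for which the function x ↦ ∫_0^∞ t^{−1/2} (T_t u)(x) dt is defined μ-a.e. (the integral converging absolutely μ-a.e.), defining an operator S u(x) = ∫_0^∞ t^{−1/2} (T_t u)(x) dt. Then there exists a constant C > 0, depending only on c, n and q, such that for every u ∈ L^q(μ) with u ≠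 0 and every λ > 0, μ({x ∈ X : |Su(x)| > λ}) ≤ (C ‖u‖_{L^q(μ)} / λ)^p. -/
open MeasureTheory Real
open scoped ENNReal

universe u

lemma weighted_holder {α : Type*} [MeasurableSpace α] (ν : Measure α) (w F : α → ℝ≥0∞)
    (hw : Measurable w) (hF : Measurable F) (hw0 : ∀ᵐ a ∂ν, w a ≠ 0 ∧ w a ≠ ∞)
    {q : ℝ} (hq : 1 < q) :
    ∫⁻ a, w a * F a ∂ν ≤
      (∫⁻ a, w a ∂ν) ^ (1 - 1/q) * (∫⁻ a, w a * F a ^ q ∂ν) ^ (1/q) := by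
  have hq0 : (0:ℝ) < q := lt_trans one_pos hq
  have hq1 : q - 1 ≠ 0 := by linarith
  have hpq : (q/(q-1)).HolderConjugate q := (Real.HolderConjugate.conjExponent hq).symm
  have hfm : Measurable (fun a => w a ^ (1 - 1/q)) := hw.pow measurable_const
  have hgm : Measurable (fun a => w a ^ (1/q) * F a) := (hw.pow measurable_const).mul hF
  have key := ENNReal.lintegral_mul_le_Lp_mul_Lq ν hpq hfm.aemeasurable hgm.aemeasurable
  have e1 : ∫⁻ a, ((fun a => w a ^ (1 - 1/q)) * fun a => w a ^ (1/q) * F a) a ∂ν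
      = ∫⁻ a, w a * F a ∂ν := by
    refine lintegral_congr_ae ?_
    filter_upwards [hw0] with a ha
    simp only [Pi.mul_apply]
    rw [← mul_assoc, ← ENNReal.rpow_add _ _ ha.1 ha.2, sub_add_cancel, ENNReal.rpow_one]
  have e2 : ∫⁻ a, (w a ^ (1 - 1/q)) ^ (q/(q-1)) ∂ν = ∫⁻ a, w a ∂ν := by
    refine lintegral_congr fun a => ?_
    rw [← ENNReal.rpow_mul, show (1 - 1/q) * (q/(q-1)) = 1 by field_simp, ENNReal.rpow_one]
  have e3 : ∫⁻ a, (w a ^ (1/q) * F a) ^ q ∂ν = ∫⁻ a, w a * F a ^ q ∂ν := by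
    refine lintegral_congr fun a => ?_
    rw [ENNReal.mul_rpow_of_nonneg _ _ hq0.le, ← ENNReal.rpow_mul,
      one_div_mul_cancel hq0.ne', ENNReal.rpow_one]
  have e4 : 1/(q/(q-1)) = 1 - 1/q := by field_simp
  rw [e1, e2, e3, e4] at key
  exact key

/-- Weak type `(q, p)` bound for the subordinated operator
`S u (x) = ∫_0^∞ t^(-1/2) (T_t u)(x) dt` built from a semigroup `(T_t)` of
linear operators on `L^q(μ)` which is a contraction on `L^q` and satisfies the
ultracontractive bound `‖T_t u‖_∞ ≤ c t^(-n/(2q)) ‖u‖_q`.  The constant `C`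
depends only on `c`, `n` and `q`. -/
theorem weak_type_subordinated (n q p c : ℝ) (hn : 0 < n) (hq : 1 < q)
    (hqn : q < n) (hp : 1 / p = 1 / q - 1 / n) (hc : 0 < c) :
    ∃ C > 0, ∀ (X : Type u) [MeasurableSpace X] (μ : Measure X), SigmaFinite μ →
      ∀ T : ℝ → (X → ℝ) → (X → ℝ),
      (∀ t > (0 : ℝ), ∀ u : X → ℝ, MemLp u (ENNReal.ofReal q) μ →
        Measurable (T t u)) →
      (∀ t > (0 : ℝ), ∀ u v : X → ℝ, MemLp u (ENNReal.ofReal q) μ →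
        MemLp v (ENNReal.ofReal q) μ → T t (u + v) =ᵐ[μ] T t u + T t v) →
      (∀ t > (0 : ℝ), ∀ (a : ℝ) (u : X → ℝ), MemLp u (ENNReal.ofReal q) μ →
        T t (a • u) =ᵐ[μ] a • T t u) →
      (∀ s > (0 : ℝ), ∀ t > (0 : ℝ), ∀ u : X → ℝ, MemLp u (ENNReal.ofReal q) μ →
        T (t + s) u =ᵐ[μ] T s (T t u)) →
      (∀ t > (0 : ℝ), ∀ u : X → ℝ, MemLp u (ENNReal.ofReal q) μ →
        eLpNorm (T t u) (ENNReal.ofReal q) μ ≤ eLpNorm u (ENNReal.ofReal q) μ) →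
      (∀ t > (0 : ℝ), ∀ u : X → ℝ, MemLp u (ENNReal.ofReal q) μ →
        eLpNorm (T t u) ∞ μ ≤
          ENNReal.ofReal (c * t ^ (-n / (2 * q))) * eLpNorm u (ENNReal.ofReal q) μ) →
      (∀ u : X → ℝ, MemLp u (ENNReal.ofReal q) μ →
        Measurable (fun pr : ℝ × X => T pr.1 u pr.2)) →
      (∀ u : X → ℝ, MemLp u (ENNReal.ofReal q) μ →
        ∀ᵐ x ∂μ, IntegrableOn (fun t => t ^ (-(1 : ℝ) / 2) * T t u x) (Set.Ioi 0)) →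
      ∀ u : X → ℝ, MemLp u (ENNReal.ofReal q) μ → ¬ u =ᵐ[μ] 0 →
      ∀ l : ℝ, 0 < l →
        μ {x | l < |∫ t in Set.Ioi (0 : ℝ), t ^ (-(1 : ℝ) / 2) * T t u x|} ≤
          ENNReal.ofReal ((C * (eLpNorm u (ENNReal.ofReal q) μ).toReal / l) ^ p) := by
  have hq0 : (0:ℝ) < q := by linarith
  have hnq : (0:ℝ) < n - q := by linarith
  set β : ℝ := (n - q) / (2*q) with hβdef
  have hβ : 0 < β := by positivity
  have hp0 : 0 < p := by
    have h1 : 0 < 1/p := by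
      rw [hp, sub_pos]
      exact one_div_lt_one_div_of_lt hq0 hqn
    exact one_div_pos.mp h1
  have hpeq : p = q*n/(n-q) := by
    have h := hp
    rw [eq_div_iff hnq.ne']
    field_simp at h
    nlinarith [h]
  have hqp : q + q/(2*β) = p := by
    rw [hpeq, hβdef]
    field_simp
    ring
  have hexp : -n/(2*q) = -(1:ℝ)/2 - β := by
    rw [hβdef]
    field_simp
    ring
  set C : ℝ := (4 ^ q * (2*c/β) ^ (q/(2*β))) ^ (1/p) with hCdef
  have hC : 0 < C := by positivity
  refine ⟨C, hC, ?_⟩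
  intro X mX μ hσ T hTm hTadd hTsmul hTsemi hLq hLinf hjm hint u hu hu0 l hl
  haveI := hσ
  set Q : ℝ≥0∞ := ENNReal.ofReal q with hQdef
  have hQ0 : Q ≠ 0 := by
    simp only [hQdef, Ne, ENNReal.ofReal_eq_zero, not_le]
    linarith
  have hQt : Q ≠ ∞ := ENNReal.ofReal_ne_top
  have hQr : Q.toReal = q := ENNReal.toReal_ofReal hq0.le
  set N : ℝ := (eLpNorm u Q μ).toReal with hNdef
  have hNtop : eLpNorm u Q μ ≠ ∞ := hu.eLpNorm_ne_top
  have hNq0 : eLpNorm u Q μ ≠ 0 := by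
    rw [Ne, eLpNorm_eq_zero_iff hu.aestronglyMeasurable hQ0]
    exact hu0
  have hN : 0 < N := ENNReal.toReal_pos hNq0 hNtop
  have hNeq : eLpNorm u Q μ = ENNReal.ofReal N := (ENNReal.ofReal_toReal hNtop).symm
  set X0 : ℝ := 2*c*N/(β*l) with hX0def
  have hX0 : 0 < X0 := by positivity
  set τ : ℝ := X0 ^ β⁻¹ with hτdef
  have hτ : 0 < τ := Real.rpow_pos_of_pos hX0 _
  have hτβ : τ ^ β = X0 := by
    rw [hτdef, ← Real.rpow_mul hX0.le, inv_mul_cancel₀ hβ.ne', Real.rpow_one]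
  set g : X → ℝ := fun x => ∫ t in Set.Ioc (0:ℝ) τ, t ^ (-(1:ℝ)/2) * T t u x with hgdef
  set h : X → ℝ := fun x => ∫ t in Set.Ioi τ, t ^ (-(1:ℝ)/2) * T t u x with hhdef
  have hfm : Measurable (fun pr : ℝ × X => pr.1 ^ (-(1:ℝ)/2) * T pr.1 u pr.2) :=
    (measurable_fst.pow measurable_const).mul (hjm u hu)
  -- splitting
  have hsplit : ∀ᵐ x ∂μ,
      (∫ t in Set.Ioi (0:ℝ), t ^ (-(1:ℝ)/2) * T t u x) = g x + h x := by
    filter_upwards [hint u hu] with x hx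
    rw [hgdef, hhdef, ← Set.Ioc_union_Ioi_eq_Ioi hτ.le,
      setIntegral_union (Set.Ioc_disjoint_Ioi le_rfl) measurableSet_Ioi
        (hx.mono_set Set.Ioc_subset_Ioi_self) (hx.mono_set (Set.Ioi_subset_Ioi hτ.le))]
  -- per-t sup bound
  have hbd : ∀ t : ℝ, 0 < t → ∀ᵐ x ∂μ, |T t u x| ≤ c * t ^ (-n/(2*q)) * N := by
    intro t ht
    have h1 := hLinf t ht u hu
    rw [hNeq, ← ENNReal.ofReal_mul (by positivity)] at h1
    have h2 : ∀ᵐ x ∂μ, (‖T t u x‖₊ : ℝ≥0∞) ≤ eLpNorm (T t u) ∞ μ := by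
      rw [eLpNorm_exponent_top]
      exact ae_le_eLpNormEssSup
    filter_upwards [h2] with x hx
    have h3 := le_trans hx h1
    rw [← enorm_eq_nnnorm, Real.enorm_eq_ofReal_abs, ENNReal.ofReal_le_ofReal_iff (by positivity)] at h3
    exact h3
  -- swap quantifiers
  have hswap : ∀ᵐ x ∂μ, ∀ᵐ t ∂(volume.restrict (Set.Ioi τ)),
      |T t u x| ≤ c * t ^ (-n/(2*q)) * N := by
    set νT := volume.restrict (Set.Ioi τ) with hνT
    have hTm2 : Measurable fun pr : X × ℝ => T pr.2 u pr.1 := (hjm u hu).comp measurable_swap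
    have hMm : Measurable fun pr : X × ℝ => c * pr.2 ^ (-n/(2*q)) * N :=
      (measurable_const.mul (measurable_snd.pow measurable_const)).mul measurable_const
    have hsm : MeasurableSet {pr : X × ℝ | ¬ |T pr.2 u pr.1| ≤ c * pr.2 ^ (-n/(2*q)) * N} :=
      (measurableSet_le hTm2.abs hMm).compl
    have hAm : MeasurableSet (Prod.swap ⁻¹'
        {pr : X × ℝ | ¬ |T pr.2 u pr.1| ≤ c * pr.2 ^ (-n/(2*q)) * N} : Set (ℝ × X)) :=
      measurable_swap hsm
    have hz : (μ.prod νT) {pr : X × ℝ | ¬ |T pr.2 u pr.1| ≤ c * pr.2 ^ (-n/(2*q)) * N} = 0 := by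
      have e : (μ.prod νT) {pr : X × ℝ | ¬ |T pr.2 u pr.1| ≤ c * pr.2 ^ (-n/(2*q)) * N}
          = (νT.prod μ) (Prod.swap ⁻¹'
              {pr : X × ℝ | ¬ |T pr.2 u pr.1| ≤ c * pr.2 ^ (-n/(2*q)) * N}) := by
        rw [← Measure.prod_swap, Measure.map_apply measurable_swap hsm]
      rw [e, Measure.measure_prod_null hAm]
      filter_upwards [ae_restrict_mem measurableSet_Ioi] with t ht
      simp only [Pi.zero_apply]
      have ht0 : 0 < t := hτ.trans ht
      have h4 := hbd t ht0
      rw [ae_iff] at h4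
      exact h4
    have hz' : ∀ᵐ pr : X × ℝ ∂(μ.prod νT), |T pr.2 u pr.1| ≤ c * pr.2 ^ (-n/(2*q)) * N := by
      rw [ae_iff]
      exact hz
    exact Measure.ae_ae_of_ae_prod hz'
  -- tail bound
  have htail : ∀ᵐ x ∂μ, |h x| ≤ l/2 := by
    filter_upwards [hswap, hint u hu] with x hx hix
    have hgint : IntegrableOn (fun t : ℝ => c * N * t ^ (-(1:ℝ) - β)) (Set.Ioi τ) volume :=
      (integrableOn_Ioi_rpow_of_lt (by linarith) hτ).const_mul _
    have hb : ∀ᵐ t ∂(volume.restrict (Set.Ioi τ)),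
        ‖t ^ (-(1:ℝ)/2) * T t u x‖ ≤ c * N * t ^ (-(1:ℝ) - β) := by
      filter_upwards [hx, ae_restrict_mem measurableSet_Ioi] with t h1 h2
      have ht0 : 0 < t := hτ.trans h2
      rw [Real.norm_eq_abs, abs_mul, abs_of_nonneg (Real.rpow_nonneg ht0.le _)]
      calc t ^ (-(1:ℝ)/2) * |T t u x|
          ≤ t ^ (-(1:ℝ)/2) * (c * t ^ (-n/(2*q)) * N) :=
            mul_le_mul_of_nonneg_left h1 (Real.rpow_nonneg ht0.le _)
        _ = c * N * (t ^ (-(1:ℝ)/2) * t ^ (-(1:ℝ)/2 - β)) := by rw [hexp]; ring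
        _ = c * N * t ^ (-(1:ℝ) - β) := by
            rw [← Real.rpow_add ht0, show -(1:ℝ)/2 + (-(1:ℝ)/2 - β) = -1 - β by ring]
    have hle := norm_integral_le_of_norm_le hgint hb
    have hval : ∫ t in Set.Ioi τ, c * N * t ^ (-(1:ℝ) - β) = l/2 := by
      rw [integral_const_mul, integral_Ioi_rpow_of_lt (by linarith) hτ,
        show (-(1:ℝ) - β) + 1 = -β by ring, Real.rpow_neg hτ.le, hτβ, hX0def]
      field_simp
    calc |h x| = ‖∫ t in Set.Ioi τ, t ^ (-(1:ℝ)/2) * T t u x‖ := (Real.norm_eq_abs _).symm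
      _ ≤ ∫ t in Set.Ioi τ, c * N * t ^ (-(1:ℝ) - β) := hle
      _ = l/2 := hval
  -- measurability of g
  have hgsm : StronglyMeasurable g :=
    MeasureTheory.StronglyMeasurable.integral_prod_left'
      (μ := volume.restrict (Set.Ioc (0:ℝ) τ)) hfm.stronglyMeasurable
  -- head L^q estimate
  set ν := volume.restrict (Set.Ioc (0:ℝ) τ) with hνdef
  set w : ℝ → ℝ≥0∞ := fun t => ENNReal.ofReal (t ^ (-(1:ℝ)/2)) with hwdef
  have hwm : Measurable w := (measurable_id.pow measurable_const).ennreal_ofReal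
  have hw0 : ∀ᵐ t ∂ν, w t ≠ 0 ∧ w t ≠ ∞ := by
    filter_upwards [ae_restrict_mem measurableSet_Ioc] with t ht
    refine ⟨?_, ENNReal.ofReal_ne_top⟩
    simp only [hwdef, Ne, ENNReal.ofReal_eq_zero, not_le]
    exact Real.rpow_pos_of_pos ht.1 _
  have hFxm : ∀ x : X, Measurable (fun t => (‖T t u x‖₊ : ℝ≥0∞)) := fun x =>
    (((hjm u hu).comp (measurable_id.prodMk measurable_const)).nnnorm).coe_nnreal_ennreal
  have hgpt : ∀ x, (‖g x‖₊ : ℝ≥0∞) ≤ ∫⁻ t, w t * (‖T t u x‖₊ : ℝ≥0∞) ∂ν := by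
    intro x
    refine le_trans (enorm_integral_le_lintegral_enorm _) (le_of_eq ?_)
    refine lintegral_congr_ae ?_
    filter_upwards [ae_restrict_mem measurableSet_Ioc] with t ht
    rw [enorm_mul, Real.enorm_eq_ofReal (Real.rpow_nonneg ht.1.le _), enorm_eq_nnnorm]
  set W := ∫⁻ t, w t ∂ν with hWdef
  set Wr : ℝ := 2 * τ ^ ((1:ℝ)/2) with hWrdef
  have hWrpos : 0 < Wr := by positivity
  have hWval : W = ENNReal.ofReal Wr := by
    have hwint : IntegrableOn (fun t : ℝ => t ^ (-(1:ℝ)/2)) (Set.Ioc 0 τ) volume := by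
      rw [← intervalIntegrable_iff_integrableOn_Ioc_of_le hτ.le]
      exact intervalIntegral.intervalIntegrable_rpow' (by norm_num)
    have hwnn : 0 ≤ᵐ[ν] fun t : ℝ => t ^ (-(1:ℝ)/2) := by
      filter_upwards [ae_restrict_mem measurableSet_Ioc] with t ht
      exact Real.rpow_nonneg ht.1.le _
    rw [hWdef, ← ofReal_integral_eq_lintegral_ofReal hwint hwnn]
    congr 1
    rw [← intervalIntegral.integral_of_le hτ.le,
      integral_rpow (Or.inl (by norm_num)),
      Real.zero_rpow (by norm_num), show (-(1:ℝ)/2 + 1) = 1/2 by norm_num]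
    rw [hWrdef]
    ring
  have hWne : W ≠ ∞ := by rw [hWval]; exact ENNReal.ofReal_ne_top
  -- per-x Hölder
  have hpx : ∀ x, ((‖g x‖₊ : ℝ≥0∞)) ^ q ≤
      W ^ (q-1) * ∫⁻ t, w t * (‖T t u x‖₊ : ℝ≥0∞) ^ q ∂ν := by
    intro x
    have h0 := weighted_holder ν w (fun t => (‖T t u x‖₊ : ℝ≥0∞)) hwm (hFxm x) hw0 hq
    calc ((‖g x‖₊ : ℝ≥0∞)) ^ q ≤ (∫⁻ t, w t * (‖T t u x‖₊ : ℝ≥0∞) ∂ν) ^ q :=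
          ENNReal.rpow_le_rpow (hgpt x) hq0.le
      _ ≤ (W ^ (1 - 1/q) * (∫⁻ t, w t * (‖T t u x‖₊ : ℝ≥0∞) ^ q ∂ν) ^ (1/q)) ^ q :=
          ENNReal.rpow_le_rpow h0 hq0.le
      _ = W ^ (q-1) * ∫⁻ t, w t * (‖T t u x‖₊ : ℝ≥0∞) ^ q ∂ν := by
          rw [ENNReal.mul_rpow_of_nonneg _ _ hq0.le, ← ENNReal.rpow_mul, ← ENNReal.rpow_mul,
            show (1 - 1/q) * q = q - 1 by field_simp,
            one_div_mul_cancel hq0.ne', ENNReal.rpow_one]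
  -- Lq contraction bound
  have hLqb : ∀ t : ℝ, 0 < t →
      ∫⁻ x, (‖T t u x‖₊ : ℝ≥0∞) ^ q ∂μ ≤ (ENNReal.ofReal N) ^ q := by
    intro t ht
    have h1 := hLq t ht u hu
    rw [hNeq, eLpNorm_eq_lintegral_rpow_enorm_toReal hQ0 hQt, hQr] at h1
    have h2 := ENNReal.rpow_le_rpow h1 hq0.le
    rwa [← ENNReal.rpow_mul, one_div_mul_cancel hq0.ne', ENNReal.rpow_one] at h2
  have hWq1ne : W ^ (q-1) ≠ ∞ := by
    rw [hWval]
    exact ENNReal.rpow_ne_top_of_nonneg (by linarith) ENNReal.ofReal_ne_top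
  have hswapm : AEMeasurable (Function.uncurry fun (x : X) (t : ℝ) =>
      w t * (‖T t u x‖₊ : ℝ≥0∞) ^ q) (μ.prod ν) := by
    apply Measurable.aemeasurable
    exact (hwm.comp measurable_snd).mul
      ((((hjm u hu).comp measurable_swap).nnnorm.coe_nnreal_ennreal).pow measurable_const)
  have hI : ∫⁻ x, ((‖g x‖₊ : ℝ≥0∞)) ^ q ∂μ ≤ W ^ (q-1) * (W * (ENNReal.ofReal N) ^ q) := by
    calc ∫⁻ x, ((‖g x‖₊ : ℝ≥0∞)) ^ q ∂μ
        ≤ ∫⁻ x, W ^ (q-1) * ∫⁻ t, w t * (‖T t u x‖₊ : ℝ≥0∞) ^ q ∂ν ∂μ := lintegral_mono hpx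
      _ = W ^ (q-1) * ∫⁻ x, ∫⁻ t, w t * (‖T t u x‖₊ : ℝ≥0∞) ^ q ∂ν ∂μ :=
          lintegral_const_mul' _ _ hWq1ne
      _ = W ^ (q-1) * ∫⁻ t, ∫⁻ x, w t * (‖T t u x‖₊ : ℝ≥0∞) ^ q ∂μ ∂ν := by
          rw [lintegral_lintegral_swap hswapm]
      _ = W ^ (q-1) * ∫⁻ t, w t * ∫⁻ x, (‖T t u x‖₊ : ℝ≥0∞) ^ q ∂μ ∂ν := by
          congr 1
          exact lintegral_congr fun t => lintegral_const_mul' _ _ ENNReal.ofReal_ne_top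
      _ ≤ W ^ (q-1) * ∫⁻ t, w t * (ENNReal.ofReal N) ^ q ∂ν := by
          refine mul_le_mul_right (lintegral_mono_ae ?_) _
          filter_upwards [ae_restrict_mem measurableSet_Ioc] with t ht
          exact mul_le_mul_right (hLqb t ht.1) _
      _ = W ^ (q-1) * (W * (ENNReal.ofReal N) ^ q) := by
          rw [lintegral_mul_const' _ _ (by
            exact ENNReal.rpow_ne_top_of_nonneg hq0.le ENNReal.ofReal_ne_top)]
  -- Chebyshev
  set ε := ENNReal.ofReal ((l/2)^q) with hεdef
  have hε0 : ε ≠ 0 := by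
    simp only [hεdef, Ne, ENNReal.ofReal_eq_zero, not_le]
    positivity
  have hεt : ε ≠ ∞ := ENNReal.ofReal_ne_top
  have hgae : AEMeasurable (fun x => ((‖g x‖₊ : ℝ≥0∞)) ^ q) μ :=
    ((hgsm.measurable.nnnorm.coe_nnreal_ennreal).pow measurable_const).aemeasurable
  have hsub : μ {x | l/2 < |g x|} ≤ μ {x | ε ≤ ((‖g x‖₊ : ℝ≥0∞)) ^ q} := by
    apply measure_mono
    intro x hx
    simp only [Set.mem_setOf_eq] at hx ⊢
    rw [hεdef, ← ENNReal.ofReal_rpow_of_pos (by positivity), ← enorm_eq_nnnorm, Real.enorm_eq_ofReal_abs]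
    exact ENNReal.rpow_le_rpow (ENNReal.ofReal_le_ofReal hx.le) hq0.le
  have hcheb : μ {x | l/2 < |g x|} ≤ (W ^ (q-1) * (W * (ENNReal.ofReal N) ^ q)) / ε := by
    rw [ENNReal.le_div_iff_mul_le (Or.inl hε0) (Or.inl hεt)]
    calc μ {x | l/2 < |g x|} * ε = ε * μ {x | l/2 < |g x|} := mul_comm _ _
      _ ≤ ε * μ {x | ε ≤ ((‖g x‖₊ : ℝ≥0∞)) ^ q} := mul_le_mul_right hsub _
      _ ≤ ∫⁻ x, ((‖g x‖₊ : ℝ≥0∞)) ^ q ∂μ := mul_meas_ge_le_lintegral₀ hgae ε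
      _ ≤ _ := hI
  -- final real computation
  have hr : 0 < N / l := by positivity
  have hX0r : X0 = (2*c/β) * (N/l) := by rw [hX0def]; field_simp
  have hDpos : (0:ℝ) < 2*c/β := by positivity
  have hrealkey : Wr ^ (q-1) * (Wr * N ^ q) / (l/2) ^ q = (C * N / l) ^ p := by
    have e1 : Wr ^ (q-1) * Wr = Wr ^ q := by
      nth_rewrite 2 [← Real.rpow_one Wr]
      rw [← Real.rpow_add hWrpos]
      norm_num
    have e2 : (Wr * N / (l/2)) ^ q = Wr ^ (q-1) * (Wr * N ^ q) / (l/2) ^ q := by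
      rw [Real.div_rpow (by positivity) (by positivity),
        Real.mul_rpow (by positivity) hN.le, ← e1]
      ring
    have e4 : τ ^ ((1:ℝ)/2) = ((2*c/β) * (N/l)) ^ ((2*β)⁻¹) := by
      rw [hτdef, ← Real.rpow_mul hX0.le, hX0r]
      congr 1
      rw [mul_inv]
      ring
    have e3 : Wr * N / (l/2) = 4 * ((2*c/β) ^ ((2*β)⁻¹) * (N/l) ^ ((2*β)⁻¹)) * (N/l) := by
      rw [hWrdef, e4, Real.mul_rpow hDpos.le hr.le]
      field_simp
      ring
    rw [← e2, e3,
      show (4:ℝ) * ((2*c/β) ^ ((2*β)⁻¹) * (N/l) ^ ((2*β)⁻¹)) * (N/l)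
        = 4 * ((2*c/β) ^ ((2*β)⁻¹)) * ((N/l) ^ ((2*β)⁻¹) * (N/l)) by ring,
      Real.mul_rpow (by positivity) (by positivity),
      Real.mul_rpow (by positivity) (by positivity),
      ← Real.rpow_mul hDpos.le,
      Real.mul_rpow (by positivity) hr.le,
      ← Real.rpow_mul hr.le,
      ← Real.rpow_add hr,
      show (2*β)⁻¹ * q + q = p by rw [← hqp]; ring,
      show C * N / l = C * (N/l) by ring,
      Real.mul_rpow hC.le hr.le, hCdef,
      ← Real.rpow_mul (by positivity), one_div_mul_cancel hp0.ne', Real.rpow_one,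
      show (2*β)⁻¹ * q = q/(2*β) by ring]
  -- conclusion
  calc μ {x | l < |∫ t in Set.Ioi (0:ℝ), t ^ (-(1:ℝ)/2) * T t u x|}
      ≤ μ {x | l/2 < |g x|} := by
        apply measure_mono_ae
        filter_upwards [hsplit, htail] with x h1 h2
        intro hx
        have hx' : l < |g x + h x| := by rw [← h1]; exact hx
        show l/2 < |g x|
        linarith [abs_add_le (g x) (h x)]
    _ ≤ (W ^ (q-1) * (W * (ENNReal.ofReal N) ^ q)) / ε := hcheb
    _ ≤ ENNReal.ofReal ((C * N / l) ^ p) := by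
        rw [hWval, hεdef, ENNReal.ofReal_rpow_of_pos hWrpos, ENNReal.ofReal_rpow_of_pos hN,
          ← ENNReal.ofReal_mul (by positivity), ← ENNReal.ofReal_mul (by positivity),
          ← ENNReal.ofReal_div_of_pos (by positivity), hrealkey]
end

section
/- Let n ≥ 2 and 1 < q < n be real numbers, let A > 0, and let V : (0, 1] → ℝ be a nondecreasing function with V(r) > 0 for all r ∈ (0, 1]. Suppose that V(r) ≥ (r / (4√2 · A))^{nq/(n+q)} · V(r/2)^{n/(n+q)} for all r ∈ (0, 1], and that there exist ε > 0 and m > 0 with V(s) ≥ ε s^m for all s ∈ (0, 1]. Then V(r) ≥ (1 / (2^{(n + 5q/2)/q} · A))^n · r^n for all r ∈ (0, 1]. -/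
open Real

/-- Iteration lemma for κ-noncollapsing: a positive nondecreasing function
`V` on `(0,1]` satisfying the recursive inequality
`V(r) ≥ (r/(4√2 A))^(nq/(n+q)) V(r/2)^(n/(n+q))` and a crude lower bound
`V(s) ≥ ε s^m` obeys the Euclidean-type bound
`V(r) ≥ (2^(-(n+5q/2)/q) / A)^n r^n`. -/
theorem volume_iteration (n q A : ℝ) (hn : 2 ≤ n) (hq1 : 1 < q) (hqn : q < n)
    (hA : 0 < A) (V : ℝ → ℝ)
    (hmono : ∀ r ∈ Set.Ioc (0 : ℝ) 1, ∀ s ∈ Set.Ioc (0 : ℝ) 1, r ≤ s → V r ≤ V s)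
    (hpos : ∀ r ∈ Set.Ioc (0 : ℝ) 1, 0 < V r)
    (hrec : ∀ r ∈ Set.Ioc (0 : ℝ) 1,
      (r / (4 * Real.sqrt 2 * A)) ^ (n * q / (n + q)) * V (r / 2) ^ (n / (n + q)) ≤ V r)
    (hlow : ∃ ε > (0 : ℝ), ∃ m > (0 : ℝ), ∀ s ∈ Set.Ioc (0 : ℝ) 1, ε * s ^ m ≤ V s) :
    ∀ r ∈ Set.Ioc (0 : ℝ) 1,
      (1 / (2 ^ ((n + 5 * q / 2) / q) * A)) ^ n * r ^ n ≤ V r := by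
  obtain ⟨ε, hε, m, hm, hlow⟩ := hlow
  have hq0 : (0:ℝ) < q := lt_trans one_pos hq1
  have hn0 : (0:ℝ) < n := lt_trans hq0 hqn
  have hnq : (0:ℝ) < n + q := by linarith
  set θ : ℝ := n / (n + q) with hθdef
  have hθ0 : 0 < θ := div_pos hn0 hnq
  have hθ1 : θ < 1 := (div_lt_one hnq).2 (by linarith)
  set B : ℝ := 4 * Real.sqrt 2 * A with hBdef
  have hs2 : 0 < Real.sqrt 2 := Real.sqrt_pos.2 (by norm_num)
  have hB : 0 < B := by
    rw [hBdef]; positivity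
  set E : ℝ := n * Real.log B + n ^ 2 / q * Real.log 2 with hEdef
  set g : ℝ → ℝ := fun r => Real.log (V r) - n * Real.log r + E with hgdef
  have hlog2 : (0:ℝ) < Real.log 2 := Real.log_pos (by norm_num)
  -- one step of the iteration
  have step : ∀ r ∈ Set.Ioc (0:ℝ) 1, θ * g (r / 2) ≤ g r := by
    intro r hr
    have hr0 : 0 < r := hr.1
    have hr2 : r / 2 ∈ Set.Ioc (0:ℝ) 1 := ⟨by linarith, by linarith [hr.2]⟩
    have hV2 : 0 < V (r / 2) := hpos _ hr2
    have hVr : 0 < V r := hpos _ hr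
    have h := hrec r hr
    have hrb : 0 < r / B := div_pos hr0 hB
    have h1 : (0:ℝ) < (r / B) ^ (n * q / (n + q)) := Real.rpow_pos_of_pos hrb _
    have h2 : (0:ℝ) < V (r / 2) ^ (n / (n + q)) := Real.rpow_pos_of_pos hV2 _
    have hL : (0:ℝ) < (r / B) ^ (n * q / (n + q)) * V (r / 2) ^ (n / (n + q)) :=
      mul_pos h1 h2
    have hlog : Real.log ((r / B) ^ (n * q / (n + q)) * V (r / 2) ^ (n / (n + q)))
        ≤ Real.log (V r) := (Real.log_le_log_iff hL hVr).2 h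
    rw [Real.log_mul h1.ne' h2.ne', Real.log_rpow hrb, Real.log_rpow hV2] at hlog
    have hlogrB : Real.log (r / B) = Real.log r - Real.log B :=
      Real.log_div hr0.ne' hB.ne'
    have hlogr2 : Real.log (r / 2) = Real.log r - Real.log 2 :=
      Real.log_div hr0.ne' two_ne_zero
    rw [hlogrB] at hlog
    simp only [hgdef, hlogr2]
    have hid : θ * (Real.log (V (r / 2)) - n * (Real.log r - Real.log 2) + E)
        = (n * q / (n + q) * (Real.log r - Real.log B) + θ * Real.log (V (r / 2)))
          - n * Real.log r + E := by
      simp only [hθdef, hEdef]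
      field_simp
      ring
    linarith
  -- iterated inequality
  have hiter : ∀ k : ℕ, ∀ r ∈ Set.Ioc (0:ℝ) 1, θ ^ k * g (r / 2 ^ k) ≤ g r := by
    intro k
    induction k with
    | zero => intro r hr; simp
    | succ k ih =>
      intro r hr
      have hr2 : r / 2 ∈ Set.Ioc (0:ℝ) 1 := ⟨by linarith [hr.1], by linarith [hr.2]⟩
      have h1 := ih (r / 2) hr2
      have h2 := step r hr
      have hrw : r / 2 / 2 ^ k = r / 2 ^ (k + 1) := by
        rw [pow_succ]; ring
      calc θ ^ (k + 1) * g (r / 2 ^ (k + 1)) = θ * (θ ^ k * g (r / 2 / 2 ^ k)) := by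
            rw [hrw]; ring
        _ ≤ θ * g (r / 2) := by
            exact mul_le_mul_of_nonneg_left h1 hθ0.le
        _ ≤ g r := h2
  -- conclude g r ≥ 0 by letting k → ∞
  have hg0 : ∀ r ∈ Set.Ioc (0:ℝ) 1, 0 ≤ g r := by
    intro r hr
    have hr0 : 0 < r := hr.1
    set a : ℝ := Real.log ε + (m - n) * Real.log r + E with hadef
    set b : ℝ := (n - m) * Real.log 2 with hbdef
    have key : ∀ k : ℕ, θ ^ k * (a + b * k) ≤ g r := by
      intro k
      have hsk : r / 2 ^ k ∈ Set.Ioc (0:ℝ) 1 := by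
        constructor
        · positivity
        · have h1 : (1:ℝ) ≤ 2 ^ k := one_le_pow₀ (by norm_num)
          have h2 : r / 2 ^ k ≤ r := by
            calc r / 2 ^ k ≤ r / 1 := div_le_div_of_nonneg_left hr0.le one_pos h1
              _ = r := div_one r
          exact h2.trans hr.2
      have hs0 : 0 < r / 2 ^ k := hsk.1
      have hVs : 0 < V (r / 2 ^ k) := hpos _ hsk
      have hεs : (0:ℝ) < ε * (r / 2 ^ k) ^ m := by positivity
      have hlog : Real.log (ε * (r / 2 ^ k) ^ m) ≤ Real.log (V (r / 2 ^ k)) :=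
        (Real.log_le_log_iff hεs hVs).2 (hlow _ hsk)
      rw [Real.log_mul hε.ne' (Real.rpow_pos_of_pos hs0 m).ne',
        Real.log_rpow hs0] at hlog
      have hlogs : Real.log (r / 2 ^ k) = Real.log r - k * Real.log 2 := by
        rw [Real.log_div hr0.ne' (by positivity), Real.log_pow]
      have hgs : a + b * k ≤ g (r / 2 ^ k) := by
        simp only [hgdef, hadef, hbdef, hlogs]
        have : Real.log ε + m * (Real.log r - k * Real.log 2)
            ≤ Real.log (V (r / 2 ^ k)) := by rw [← hlogs]; exact hlog
        nlinarith
      have := mul_le_mul_of_nonneg_left hgs (pow_nonneg hθ0.le k)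
      exact this.trans (hiter k r hr)
    have htend : Filter.Tendsto (fun k : ℕ => θ ^ k * (a + b * k)) Filter.atTop (nhds 0) := by
      have h1 : Filter.Tendsto (fun k : ℕ => a * θ ^ k) Filter.atTop (nhds (a * 0)) :=
        (tendsto_pow_atTop_nhds_zero_of_lt_one hθ0.le hθ1).const_mul a
      have h2 : Filter.Tendsto (fun k : ℕ => b * (k * θ ^ k)) Filter.atTop (nhds (b * 0)) :=
        (tendsto_self_mul_const_pow_of_lt_one hθ0.le hθ1).const_mul b
      have := h1.add h2
      simp only [mul_zero, add_zero] at this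
      refine this.congr fun k => by ring
    exact le_of_tendsto' htend key
  -- unfold the conclusion
  intro r hr
  have hr0 : 0 < r := hr.1
  have hVr : 0 < V r := hpos _ hr
  have h2c : (0:ℝ) < (2:ℝ) ^ ((n + 5 * q / 2) / q) := Real.rpow_pos_of_pos two_pos _
  have hK : (0:ℝ) < 1 / ((2:ℝ) ^ ((n + 5 * q / 2) / q) * A) := by positivity
  have hX : (0:ℝ) < (1 / ((2:ℝ) ^ ((n + 5 * q / 2) / q) * A)) ^ n * r ^ n := by
    have := Real.rpow_pos_of_pos hK n
    have := Real.rpow_pos_of_pos hr0 n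
    positivity
  rw [← Real.log_le_log_iff hX hVr]
  have hgr := hg0 r hr
  simp only [hgdef] at hgr
  have hlogX : Real.log ((1 / ((2:ℝ) ^ ((n + 5 * q / 2) / q) * A)) ^ n * r ^ n)
      = n * (-(((n + 5 * q / 2) / q) * Real.log 2 + Real.log A)) + n * Real.log r := by
    rw [Real.log_mul (Real.rpow_pos_of_pos hK n).ne' (Real.rpow_pos_of_pos hr0 n).ne',
      Real.log_rpow hK, Real.log_rpow hr0, one_div, Real.log_inv,
      Real.log_mul h2c.ne' hA.ne', Real.log_rpow two_pos]
  rw [hlogX]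
  have hlogB : Real.log B = 5 / 2 * Real.log 2 + Real.log A := by
    rw [hBdef, Real.log_mul (by positivity) hA.ne',
      Real.log_mul (by norm_num) hs2.ne', Real.log_sqrt (by norm_num),
      show (4:ℝ) = 2 ^ 2 by norm_num, Real.log_pow]
    push_cast
    ring
  have hE : E = (n ^ 2 / q + 5 * n / 2) * Real.log 2 + n * Real.log A := by
    rw [hEdef, hlogB]; ring
  have hc : n * (((n + 5 * q / 2) / q) * Real.log 2 + Real.log A)
      = (n ^ 2 / q + 5 * n / 2) * Real.log 2 + n * Real.log A := by
    field_simp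
  rw [hE] at hgr
  nlinarith [hgr, hc]
end
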